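/- Let 0 ≤ β < 1 and suppose there exists s₀ > 0 such that lim_{N→∞} R₂(β;s,N) = 2s for all 0 < s < s₀. Then lim_{N→∞} R₂(β;s,N) = 2s for all s > 0, i.e. the sequence has Poissonian β-pair correlations. -/

import Mathlib

open Finset Filter MeasureTheory
open scoped Classical
open scoped ENNReal

/-- Distance to the nearest integer. -/
noncomputable def nd (x : ℝ) : ℝ := |x - round x|

/-- Signed distance to the nearest integer: `{x}` if `{x} ≤ 1/2`, else `{x} - 1`. -/
noncomputable def sd (x : ℝ) : ℝ :=
  if Int.fract x ≤ 1/2 then Int.fract x else Int.fract x - 1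

/-- Number of pairs `m ≠ n ≤ N` with `‖x_m - x_n‖ ≤ r`. -/
noncomputable def pairCount (x : ℕ → ℝ) (N : ℕ) (r : ℝ) : ℕ :=
  ((Finset.Icc 1 N ×ˢ Finset.Icc 1 N).filter
    (fun p => p.1 ≠ p.2 ∧ nd (x p.1 - x p.2) ≤ r)).card

/-- The pair correlation function with parameter `β`. -/
noncomputable def R2 (x : ℕ → ℝ) (β s : ℝ) (N : ℕ) : ℝ :=
  (pairCount x N (s / (N : ℝ) ^ β) : ℝ) / (N : ℝ) ^ (2 - β)

/-- `F_β(t,s,N) = N^{β-1} · #{n ≤ N : ‖x_n - t‖ ≤ s/(2N^β)}`. -/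
noncomputable def Fb (x : ℕ → ℝ) (β t s : ℝ) (N : ℕ) : ℝ :=
  (((Finset.Icc 1 N).filter (fun n => nd (x n - t) ≤ s / (2 * (N : ℝ) ^ β))).card : ℝ)
    / (N : ℝ) ^ (1 - β)

/-- Uniform distribution modulo 1 of a sequence in `[0,1]`. -/
def UnifDist (x : ℕ → ℝ) : Prop :=
  ∀ a b : ℝ, 0 ≤ a → a < b → b ≤ 1 →
    Tendsto (fun N : ℕ =>
      (((Finset.Icc 1 N).filter (fun i => x i ∈ Set.Icc a b)).card : ℝ) / N)
      atTop (nhds (b - a))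

/-- Weak Poissonian pair correlations with parameter `γ` (for `γ = 0`, only scales
`s ≤ 1/2` are required). -/
def PPC (x : ℕ → ℝ) (γ : ℝ) : Prop :=
  ∀ s : ℝ, 0 < s → (γ = 0 → s ≤ 1/2) →
    Tendsto (fun N => R2 x γ s N) atTop (nhds (2 * s))

lemma nd_nonneg (d : ℝ) : 0 ≤ nd d := abs_nonneg _

lemma nd_eq_min (d : ℝ) : nd d = min (Int.fract d) (1 - Int.fract d) :=
  abs_sub_round_eq_min d

lemma nd_int_shift (d : ℝ) (k : ℤ) : nd (d + k) = nd d := by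
  simp [nd_eq_min, Int.fract_add_intCast]

lemma nd_zero : nd 0 = 0 := by simp [nd]

lemma nd_sub_eq (a b : ℝ) : nd (Int.fract a - Int.fract b) = nd (a - b) := by
  have h : a - b = (Int.fract a - Int.fract b) + ((⌊a⌋ - ⌊b⌋ : ℤ) : ℝ) := by
    have ha := Int.floor_add_fract a
    have hb := Int.floor_add_fract b
    push_cast
    linarith
  rw [h, nd_int_shift]

lemma nd_neg (d : ℝ) : nd (-d) = nd d := by
  rcases eq_or_ne (Int.fract d) 0 with h | h
  · have h' : Int.fract (-d) = 0 := Int.fract_neg_eq_zero.2 h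
    rw [nd_eq_min, nd_eq_min, h, h']
  · rw [nd_eq_min, nd_eq_min, Int.fract_neg h]
    rw [min_comm]
    congr 1 <;> ring

lemma nd_small {d : ℝ} (h0 : 0 ≤ d) (h1 : d ≤ 1/2) : nd d = d := by
  rw [nd_eq_min, Int.fract_eq_self.2 ⟨h0, by linarith⟩]
  exact min_eq_left (by linarith)

lemma nd_large {d : ℝ} (h0 : 1/2 ≤ d) (h1 : d < 1) : nd d = 1 - d := by
  rw [nd_eq_min, Int.fract_eq_self.2 ⟨by linarith, h1⟩]
  exact min_eq_right (by linarith)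

lemma mem_arc {u ℓ t : ℝ} (hu0 : 0 ≤ u) (hu1 : u < 1) (hl1 : ℓ ≤ 1)
    (ht0 : 0 ≤ t) (ht1 : t < 1) :
    Int.fract (u - t) < ℓ ↔ ((u - ℓ < t ∧ t ≤ u) ∨ (u + 1 - ℓ < t)) := by
  rcases le_or_gt t u with hc | hc
  · have hf : Int.fract (u - t) = u - t := Int.fract_eq_self.2 ⟨by linarith, by linarith⟩
    rw [hf]
    constructor
    · intro H; exact Or.inl ⟨by linarith, hc⟩
    · rintro (⟨H, _⟩ | H) <;> linarith
  · have h2 : Int.fract (u - t + (1:ℤ)) = Int.fract (u - t) := Int.fract_add_intCast _ _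
    have h1 : Int.fract (u - t) = u - t + 1 := by
      rw [← h2]
      push_cast
      exact Int.fract_eq_self.2 ⟨by linarith, by linarith⟩
    rw [h1]
    constructor
    · intro H; right; linarith
    · rintro (⟨_, H⟩ | H) <;> linarith

lemma marc_meas (a ℓ : ℝ) : MeasurableSet {t : ℝ | Int.fract (a - t) < ℓ} := by
  have : Measurable fun t : ℝ => Int.fract (a - t) :=
    measurable_fract.comp (measurable_const.sub measurable_id)
  exact measurableSet_lt this measurable_const

lemma fract_center (a t : ℝ) : Int.fract (a - t) = Int.fract (Int.fract a - t) := by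
  have h : a - t = (Int.fract a - t) + (⌊a⌋ : ℤ) := by
    have := Int.floor_add_fract a
    push_cast
    linarith
  rw [h, Int.fract_add_intCast]

lemma vol_arc0 {u ℓ : ℝ} (hu0 : 0 ≤ u) (hu1 : u < 1) (hl0 : 0 ≤ ℓ) (hl1 : ℓ ≤ 1) :
    volume ({t : ℝ | Int.fract (u - t) < ℓ} ∩ Set.Ico 0 1) = ENNReal.ofReal ℓ := by
  rcases le_or_gt ℓ u with hc | hc
  · have hset : {t : ℝ | Int.fract (u - t) < ℓ} ∩ Set.Ico 0 1 = Set.Ioc (u - ℓ) u := by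
      ext t
      simp only [Set.mem_inter_iff, Set.mem_setOf_eq, Set.mem_Ico, Set.mem_Ioc]
      constructor
      · rintro ⟨h1, ht0, ht1⟩
        rcases (mem_arc hu0 hu1 hl1 ht0 ht1).1 h1 with ⟨a, b⟩ | a
        · exact ⟨a, b⟩
        · exact absurd a (by linarith)
      · rintro ⟨a, b⟩
        have ht0 : (0:ℝ) ≤ t := by linarith
        have ht1 : t < 1 := by linarith
        exact ⟨(mem_arc hu0 hu1 hl1 ht0 ht1).2 (Or.inl ⟨a, b⟩), ht0, ht1⟩
    rw [hset, Real.volume_Ioc]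
    congr 1; ring
  · have hset : {t : ℝ | Int.fract (u - t) < ℓ} ∩ Set.Ico 0 1
        = Set.Icc 0 u ∪ Set.Ioo (u + 1 - ℓ) 1 := by
      ext t
      simp only [Set.mem_inter_iff, Set.mem_setOf_eq, Set.mem_Ico, Set.mem_union,
        Set.mem_Icc, Set.mem_Ioo]
      constructor
      · rintro ⟨h1, ht0, ht1⟩
        rcases (mem_arc hu0 hu1 hl1 ht0 ht1).1 h1 with ⟨a, b⟩ | a
        · exact Or.inl ⟨ht0, b⟩
        · exact Or.inr ⟨a, ht1⟩
      · rintro (⟨a, b⟩ | ⟨a, b⟩)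
        · have ht1 : t < 1 := by linarith
          exact ⟨(mem_arc hu0 hu1 hl1 a ht1).2 (Or.inl ⟨by linarith, b⟩), a, ht1⟩
        · have ht0 : (0:ℝ) ≤ t := by linarith
          exact ⟨(mem_arc hu0 hu1 hl1 ht0 b).2 (Or.inr a), ht0, b⟩
    rw [hset, measure_union _ measurableSet_Ioo]
    · rw [Real.volume_Icc, Real.volume_Ioo, ← ENNReal.ofReal_add (by linarith) (by linarith)]
      congr 1; ring
    · apply Set.disjoint_left.2
      rintro t ⟨_, b⟩ ⟨c, _⟩
      linarith

lemma vol_arc2 {u v ℓ : ℝ} (hv0 : 0 ≤ v) (hvu : v ≤ u) (hu1 : u < 1)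
    (hl0 : 0 < ℓ) (hl : ℓ ≤ 1/2) :
    volume (({t : ℝ | Int.fract (u - t) < ℓ} ∩ {t : ℝ | Int.fract (v - t) < ℓ})
      ∩ Set.Ico 0 1) = ENNReal.ofReal (ℓ - nd (u - v)) := by
  have hu0 : (0:ℝ) ≤ u := le_trans hv0 hvu
  have hv1 : v < 1 := lt_of_le_of_lt hvu hu1
  have hl1 : ℓ ≤ 1 := by linarith
  have hd0 : 0 ≤ u - v := by linarith
  have key : ∀ t : ℝ, t ∈ ({t : ℝ | Int.fract (u - t) < ℓ} ∩ {t : ℝ | Int.fract (v - t) < ℓ})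
      ∩ Set.Ico 0 1 ↔ (0 ≤ t ∧ t < 1 ∧
        ((u - ℓ < t ∧ t ≤ u) ∨ (u + 1 - ℓ < t)) ∧ ((v - ℓ < t ∧ t ≤ v) ∨ (v + 1 - ℓ < t))) := by
    intro t
    simp only [Set.mem_inter_iff, Set.mem_setOf_eq, Set.mem_Ico]
    constructor
    · rintro ⟨⟨h1, h2⟩, ht0, ht1⟩
      exact ⟨ht0, ht1, (mem_arc hu0 hu1 hl1 ht0 ht1).1 h1, (mem_arc hv0 hv1 hl1 ht0 ht1).1 h2⟩
    · rintro ⟨ht0, ht1, h1, h2⟩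
      exact ⟨⟨(mem_arc hu0 hu1 hl1 ht0 ht1).2 h1, (mem_arc hv0 hv1 hl1 ht0 ht1).2 h2⟩, ht0, ht1⟩
  rcases lt_or_ge (u - v) ℓ with hd1 | hd1
  · rcases le_or_gt ℓ u with hu2 | hu2
    · -- near overlap, no window split
      have hset : ({t : ℝ | Int.fract (u - t) < ℓ} ∩ {t : ℝ | Int.fract (v - t) < ℓ})
          ∩ Set.Ico 0 1 = Set.Ioc (u - ℓ) v := by
        ext t
        rw [key t]
        simp only [Set.mem_Ioc]
        constructor
        · rintro ⟨ht0, ht1, (⟨a1, a2⟩ | a), (⟨b1, b2⟩ | b)⟩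
          · exact ⟨a1, b2⟩
          · linarith
          · linarith
          · linarith
        · rintro ⟨a, b⟩
          refine ⟨by linarith, by linarith, Or.inl ⟨a, by linarith⟩, Or.inl ⟨by linarith, b⟩⟩
      rw [hset, Real.volume_Ioc, nd_small hd0 (by linarith)]
      congr 1; ring
    · -- near overlap, window split at 0
      have hset : ({t : ℝ | Int.fract (u - t) < ℓ} ∩ {t : ℝ | Int.fract (v - t) < ℓ})
          ∩ Set.Ico 0 1 = Set.Icc 0 v ∪ Set.Ioo (u + 1 - ℓ) 1 := by
        ext t
        rw [key t]
        simp only [Set.mem_union, Set.mem_Icc, Set.mem_Ioo]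
        constructor
        · rintro ⟨ht0, ht1, (⟨a1, a2⟩ | a), (⟨b1, b2⟩ | b)⟩
          · exact Or.inl ⟨ht0, b2⟩
          · linarith
          · linarith
          · exact Or.inr ⟨a, ht1⟩
        · rintro (⟨a, b⟩ | ⟨a, b⟩)
          · refine ⟨a, by linarith, Or.inl ⟨by linarith, by linarith⟩,
              Or.inl ⟨by linarith, b⟩⟩
          · refine ⟨by linarith, b, Or.inr a, Or.inr (by linarith)⟩
      rw [hset, measure_union _ measurableSet_Ioo]
      · rw [Real.volume_Icc, Real.volume_Ioo, nd_small hd0 (by linarith),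
          ← ENNReal.ofReal_add (by linarith) (by linarith)]
        congr 1; ring
      · apply Set.disjoint_left.2
        rintro t ⟨_, b⟩ ⟨c, _⟩
        linarith
  · rcases le_or_gt (u - v) (1 - ℓ) with hd2 | hd2
    · -- empty middle case
      have hset : ({t : ℝ | Int.fract (u - t) < ℓ} ∩ {t : ℝ | Int.fract (v - t) < ℓ})
          ∩ Set.Ico 0 1 = ∅ := by
        ext t
        rw [key t]
        simp only [Set.mem_empty_iff_false, iff_false]
        rintro ⟨ht0, ht1, (⟨a1, a2⟩ | a), (⟨b1, b2⟩ | b)⟩ <;> linarith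
      rw [hset]
      have : ℓ - nd (u - v) ≤ 0 := by
        rw [nd_eq_min, Int.fract_eq_self.2 ⟨hd0, by linarith⟩]
        rcases min_cases (u - v) (1 - (u - v)) with ⟨e, _⟩ | ⟨e, _⟩ <;> rw [e] <;> linarith
      simp [ENNReal.ofReal_eq_zero.2 this]
    · -- far overlap
      have hset : ({t : ℝ | Int.fract (u - t) < ℓ} ∩ {t : ℝ | Int.fract (v - t) < ℓ})
          ∩ Set.Ico 0 1 = Set.Ioc (v + 1 - ℓ) u := by
        ext t
        rw [key t]
        simp only [Set.mem_Ioc]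
        constructor
        · rintro ⟨ht0, ht1, (⟨a1, a2⟩ | a), (⟨b1, b2⟩ | b)⟩
          · linarith
          · exact ⟨b, a2⟩
          · linarith
          · linarith
        · rintro ⟨a, b⟩
          refine ⟨by linarith, by linarith, Or.inl ⟨by linarith, b⟩, Or.inr a⟩
      rw [hset, Real.volume_Ioc, nd_large (by linarith) (by linarith)]
      congr 1; ring

/-- number of points within the half-open arc `[0,ℓ)` to the left of `x n - c`. -/
noncomputable def qc (x : ℕ → ℝ) (N : ℕ) (ℓ c : ℝ) (t : ℝ) : ℕ :=
  ((Finset.Icc 1 N).filter (fun n => Int.fract (x n - c - t) < ℓ)).card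

noncomputable def Sr (x : ℕ → ℝ) (N : ℕ) (ℓ : ℝ) : ℝ :=
  ∑ p ∈ (Finset.Icc 1 N ×ˢ Finset.Icc 1 N), max (ℓ - nd (x p.1 - x p.2)) 0

lemma Sr_nonneg (x : ℕ → ℝ) (N : ℕ) (ℓ : ℝ) : 0 ≤ Sr x N ℓ :=
  Finset.sum_nonneg fun _ _ => le_max_right _ _

lemma Sr_zero (x : ℕ → ℝ) (N : ℕ) : Sr x N 0 = 0 := by
  apply Finset.sum_eq_zero
  intro p _
  have := nd_nonneg (x p.1 - x p.2)
  rw [max_eq_right (by linarith)]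

lemma ofReal_max0 (a : ℝ) : ENNReal.ofReal (max a 0) = ENNReal.ofReal a := by
  rcases le_total a 0 with h | h
  · rw [max_eq_right h, ENNReal.ofReal_eq_zero.2 h, ENNReal.ofReal_zero]
  · rw [max_eq_left h]

lemma Sr_ofReal (x : ℕ → ℝ) (N : ℕ) (ℓ : ℝ) :
    ENNReal.ofReal (Sr x N ℓ)
      = ∑ p ∈ (Finset.Icc 1 N ×ˢ Finset.Icc 1 N), ENNReal.ofReal (ℓ - nd (x p.1 - x p.2)) := by
  rw [Sr, ENNReal.ofReal_sum_of_nonneg (fun _ _ => le_max_right _ _)]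
  exact Finset.sum_congr rfl fun p _ => ofReal_max0 _

lemma vol_pair (a b ℓ : ℝ) (hl0 : 0 < ℓ) (hl : ℓ ≤ 1/2) :
    volume (({t : ℝ | Int.fract (a - t) < ℓ} ∩ {t : ℝ | Int.fract (b - t) < ℓ})
      ∩ Set.Ico 0 1) = ENNReal.ofReal (ℓ - nd (a - b)) := by
  have ha : {t : ℝ | Int.fract (a - t) < ℓ} = {t : ℝ | Int.fract (Int.fract a - t) < ℓ} := by
    ext t; rw [Set.mem_setOf_eq, Set.mem_setOf_eq, fract_center]
  have hb : {t : ℝ | Int.fract (b - t) < ℓ} = {t : ℝ | Int.fract (Int.fract b - t) < ℓ} := by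
    ext t; rw [Set.mem_setOf_eq, Set.mem_setOf_eq, fract_center]
  rw [ha, hb]
  rcases le_total (Int.fract b) (Int.fract a) with hc | hc
  · rw [vol_arc2 (Int.fract_nonneg b) hc (Int.fract_lt_one a) hl0 hl, nd_sub_eq]
  · rw [Set.inter_comm {t : ℝ | Int.fract (Int.fract a - t) < ℓ},
      vol_arc2 (Int.fract_nonneg a) hc (Int.fract_lt_one b) hl0 hl]
    rw [show Int.fract b - Int.fract a = -(Int.fract a - Int.fract b) by ring, nd_neg,
      nd_sub_eq]

lemma vol_arc1 (a ℓ : ℝ) (hl0 : 0 ≤ ℓ) (hl1 : ℓ ≤ 1) :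
    volume ({t : ℝ | Int.fract (a - t) < ℓ} ∩ Set.Ico 0 1) = ENNReal.ofReal ℓ := by
  have ha : {t : ℝ | Int.fract (a - t) < ℓ} = {t : ℝ | Int.fract (Int.fract a - t) < ℓ} := by
    ext t; rw [Set.mem_setOf_eq, Set.mem_setOf_eq, fract_center]
  rw [ha, vol_arc0 (Int.fract_nonneg a) (Int.fract_lt_one a) hl0 hl1]

lemma qc_cast (x : ℕ → ℝ) (N : ℕ) (ℓ c : ℝ) (t : ℝ) :
    (qc x N ℓ c t : ℝ≥0∞)
      = ∑ n ∈ Finset.Icc 1 N,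
          Set.indicator {t' : ℝ | Int.fract (x n - c - t') < ℓ} (fun _ => (1:ℝ≥0∞)) t := by
  rw [qc, Finset.card_filter]
  push_cast
  refine Finset.sum_congr rfl fun n _ => ?_
  simp [Set.indicator_apply, Set.mem_setOf_eq]

lemma qc_meas (x : ℕ → ℝ) (N : ℕ) (ℓ c : ℝ) :
    Measurable (fun t => (qc x N ℓ c t : ℝ≥0∞)) := by
  have : (fun t => (qc x N ℓ c t : ℝ≥0∞)) = fun t => ∑ n ∈ Finset.Icc 1 N,
      Set.indicator {t' : ℝ | Int.fract (x n - c - t') < ℓ} (fun _ => (1:ℝ≥0∞)) t := by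
    funext t; exact qc_cast x N ℓ c t
  rw [this]
  exact Finset.measurable_sum _ fun n _ =>
    (measurable_const.indicator (marc_meas (x n - c) ℓ))

lemma lint_q_sq (x : ℕ → ℝ) (N : ℕ) {ℓ : ℝ} (c : ℝ) (hl0 : 0 < ℓ) (hl : ℓ ≤ 1/2) :
    ∫⁻ t in Set.Ico (0:ℝ) 1, (qc x N ℓ c t : ℝ≥0∞)^2 = ENNReal.ofReal (Sr x N ℓ) := by
  have key : ∀ t : ℝ, (qc x N ℓ c t : ℝ≥0∞)^2
      = ∑ p ∈ (Finset.Icc 1 N ×ˢ Finset.Icc 1 N),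
          Set.indicator ({t' : ℝ | Int.fract (x p.1 - c - t') < ℓ}
            ∩ {t' : ℝ | Int.fract (x p.2 - c - t') < ℓ}) (fun _ => (1:ℝ≥0∞)) t := by
    intro t
    rw [qc_cast, sq, Finset.sum_mul_sum, ← Finset.sum_product']
    refine Finset.sum_congr rfl fun p _ => ?_
    rw [← Set.inter_indicator_mul]
    simp
  calc ∫⁻ t in Set.Ico (0:ℝ) 1, (qc x N ℓ c t : ℝ≥0∞)^2
      = ∫⁻ t in Set.Ico (0:ℝ) 1, ∑ p ∈ (Finset.Icc 1 N ×ˢ Finset.Icc 1 N),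
          Set.indicator ({t' : ℝ | Int.fract (x p.1 - c - t') < ℓ}
            ∩ {t' : ℝ | Int.fract (x p.2 - c - t') < ℓ}) (fun _ => (1:ℝ≥0∞)) t := by
        exact lintegral_congr fun t => key t
    _ = ∑ p ∈ (Finset.Icc 1 N ×ˢ Finset.Icc 1 N), ∫⁻ t in Set.Ico (0:ℝ) 1,
          Set.indicator ({t' : ℝ | Int.fract (x p.1 - c - t') < ℓ}
            ∩ {t' : ℝ | Int.fract (x p.2 - c - t') < ℓ}) (fun _ => (1:ℝ≥0∞)) t := by
        exact lintegral_finset_sum _ fun p _ =>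
          measurable_const.indicator ((marc_meas (x p.1 - c) ℓ).inter (marc_meas (x p.2 - c) ℓ))
    _ = ∑ p ∈ (Finset.Icc 1 N ×ˢ Finset.Icc 1 N),
          ENNReal.ofReal (ℓ - nd (x p.1 - x p.2)) := by
        refine Finset.sum_congr rfl fun p _ => ?_
        simp only [show (fun _ : ℝ => (1:ℝ≥0∞)) = (1 : ℝ → ℝ≥0∞) from rfl]
        rw [lintegral_indicator_one ((marc_meas (x p.1 - c) ℓ).inter (marc_meas (x p.2 - c) ℓ)),
          Measure.restrict_apply' measurableSet_Ico]
        have := vol_pair (x p.1 - c) (x p.2 - c) ℓ hl0 hl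
        rw [show x p.1 - c - (x p.2 - c) = x p.1 - x p.2 by ring] at this
        exact this
    _ = ENNReal.ofReal (Sr x N ℓ) := (Sr_ofReal x N ℓ).symm

lemma lint_q (x : ℕ → ℝ) (N : ℕ) {ℓ : ℝ} (c : ℝ) (hl0 : 0 ≤ ℓ) (hl1 : ℓ ≤ 1) :
    ∫⁻ t in Set.Ico (0:ℝ) 1, (qc x N ℓ c t : ℝ≥0∞) = N * ENNReal.ofReal ℓ := by
  calc ∫⁻ t in Set.Ico (0:ℝ) 1, (qc x N ℓ c t : ℝ≥0∞)
      = ∫⁻ t in Set.Ico (0:ℝ) 1, ∑ n ∈ Finset.Icc 1 N,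
          Set.indicator {t' : ℝ | Int.fract (x n - c - t') < ℓ} (fun _ => (1:ℝ≥0∞)) t := by
        exact lintegral_congr fun t => qc_cast x N ℓ c t
    _ = ∑ n ∈ Finset.Icc 1 N, ∫⁻ t in Set.Ico (0:ℝ) 1,
          Set.indicator {t' : ℝ | Int.fract (x n - c - t') < ℓ} (fun _ => (1:ℝ≥0∞)) t := by
        exact lintegral_finset_sum _ fun n _ => measurable_const.indicator (marc_meas (x n - c) ℓ)
    _ = ∑ n ∈ Finset.Icc 1 N, ENNReal.ofReal ℓ := by
        refine Finset.sum_congr rfl fun n _ => ?_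
        simp only [show (fun _ : ℝ => (1:ℝ≥0∞)) = (1 : ℝ → ℝ≥0∞) from rfl]
        rw [lintegral_indicator_one (marc_meas (x n - c) ℓ),
          Measure.restrict_apply' measurableSet_Ico]
        exact vol_arc1 (x n - c) ℓ hl0 hl1
    _ = N * ENNReal.ofReal ℓ := by
        rw [Finset.sum_const, Nat.card_Icc]
        simp [nsmul_eq_mul]

lemma fract_window {ℓ : ℝ} (hl0 : 0 < ℓ) (K : ℕ) (hK : ((K:ℝ)+1) * ℓ ≤ 1) (y : ℝ) :
    Int.fract (y - (K:ℝ)*ℓ) < ℓ ↔ ((K:ℝ)*ℓ ≤ Int.fract y ∧ Int.fract y < ((K:ℝ)+1)*ℓ) := by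
  have hKl0 : (0:ℝ) ≤ (K:ℝ)*ℓ := by positivity
  have hl1 : ℓ ≤ 1 := by nlinarith
  have ha0 : 0 ≤ Int.fract y := Int.fract_nonneg y
  have ha1 : Int.fract y < 1 := Int.fract_lt_one y
  have hfr : Int.fract (y - (K:ℝ)*ℓ) = Int.fract (Int.fract y - (K:ℝ)*ℓ) := by
    have h : y - (K:ℝ)*ℓ = (Int.fract y - (K:ℝ)*ℓ) + ((⌊y⌋ : ℤ) : ℝ) := by
      have := Int.floor_add_fract y; push_cast; linarith
    rw [h, Int.fract_add_intCast]
  rw [hfr]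
  constructor
  · intro H
    have hfl : Int.fract (Int.fract y - (K:ℝ)*ℓ)
        = Int.fract y - (K:ℝ)*ℓ - (⌊Int.fract y - (K:ℝ)*ℓ⌋ : ℝ) := rfl
    have h0 : (0:ℝ) ≤ Int.fract y - (K:ℝ)*ℓ - (⌊Int.fract y - (K:ℝ)*ℓ⌋ : ℝ) := by
      rw [← hfl]; exact Int.fract_nonneg _
    have hm1 : ⌊Int.fract y - (K:ℝ)*ℓ⌋ < 1 := Int.floor_lt.2 (by push_cast; linarith)
    have hmle : ⌊Int.fract y - (K:ℝ)*ℓ⌋ ≤ 0 := by omega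
    rw [hfl] at H
    rcases eq_or_lt_of_le hmle with hmeq | hmlt
    · rw [hmeq] at H h0
      push_cast at H h0
      exact ⟨by linarith, by linarith⟩
    · exfalso
      have hm : ⌊Int.fract y - (K:ℝ)*ℓ⌋ ≤ -1 := by omega
      have hmr : ((⌊Int.fract y - (K:ℝ)*ℓ⌋ : ℤ) : ℝ) ≤ -1 := by exact_mod_cast hm
      linarith
  · rintro ⟨h1, h2⟩
    have he : Int.fract (Int.fract y - (K:ℝ)*ℓ) = Int.fract y - (K:ℝ)*ℓ :=
      Int.fract_eq_self.2 ⟨by linarith, by linarith⟩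
    rw [he]; linarith

lemma step_count (b : ℝ) {ℓ : ℝ} (hl0 : 0 < ℓ) (K : ℕ) (hK : ((K:ℝ)+1)*ℓ ≤ 1) :
    (if Int.fract b < ((K:ℝ)+1)*ℓ then (1:ℕ) else 0)
      = (if Int.fract b < (K:ℝ)*ℓ then (1:ℕ) else 0)
        + (if Int.fract (b - (K:ℝ)*ℓ) < ℓ then (1:ℕ) else 0) := by
  have hw := fract_window hl0 K hK b
  by_cases h1 : Int.fract b < (K:ℝ)*ℓ
  · rw [if_pos h1, if_pos (lt_of_lt_of_le h1 (by nlinarith)), if_neg]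
    intro hcon
    exact absurd h1 (not_lt.2 (hw.1 hcon).1)
  · by_cases h2 : Int.fract b < ((K:ℝ)+1)*ℓ
    · rw [if_pos h2, if_neg h1, if_pos (hw.2 ⟨le_of_not_gt h1, h2⟩)]
    · rw [if_neg h2, if_neg h1, if_neg]
      intro hcon
      exact h2 (hw.1 hcon).2

lemma qc_partition (x : ℕ → ℝ) (N : ℕ) {ℓ : ℝ} (hl0 : 0 < ℓ) (K : ℕ)
    (hK : (K:ℝ) * ℓ ≤ 1) (t : ℝ) :
    qc x N ((K:ℝ) * ℓ) 0 t = ∑ k ∈ Finset.range K, qc x N ℓ ((k:ℝ) * ℓ) t := by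
  induction K with
  | zero =>
      simp only [Nat.cast_zero, zero_mul, Finset.range_zero, Finset.sum_empty]
      rw [qc]
      convert Finset.card_empty
      apply Finset.filter_false_of_mem
      intro n _
      have := Int.fract_nonneg (x n - 0 - t)
      push_neg
      linarith
  | succ K ih =>
      have hcast : ((K+1:ℕ):ℝ) = (K:ℝ)+1 := by push_cast; ring
      rw [hcast] at hK
      have hK' : (K:ℝ) * ℓ ≤ 1 := by nlinarith
      rw [Finset.sum_range_succ, ← ih hK']
      rw [qc, qc, qc, Finset.card_filter, Finset.card_filter, Finset.card_filter,
        ← Finset.sum_add_distrib]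
      refine Finset.sum_congr rfl fun n _ => ?_
      rw [show x n - (K:ℝ)*ℓ - t = (x n - 0 - t) - (K:ℝ)*ℓ from by ring, hcast]
      exact step_count (x n - 0 - t) hl0 K hK

lemma Sr_subadd (x : ℕ → ℝ) (N : ℕ) {ℓ : ℝ} (hl0 : 0 < ℓ) (K : ℕ) (hK1 : 1 ≤ K)
    (hK : (K:ℝ) * ℓ ≤ 1/2) :
    Sr x N ((K:ℝ)*ℓ) ≤ (K:ℝ)^2 * Sr x N ℓ := by
  have hKpos : (0:ℝ) < (K:ℝ) := by exact_mod_cast hK1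
  rw [← ENNReal.ofReal_le_ofReal_iff (mul_nonneg (by positivity) (Sr_nonneg x N ℓ))]
  have hKl0 : 0 < (K:ℝ)*ℓ := by positivity
  rw [← lint_q_sq x N 0 hKl0 hK]
  have hRHS : ENNReal.ofReal ((K:ℝ)^2 * Sr x N ℓ)
      = (K : ℝ≥0∞)^2 * ENNReal.ofReal (Sr x N ℓ) := by
    rw [ENNReal.ofReal_mul (by positivity), ENNReal.ofReal_pow (by positivity),
      ENNReal.ofReal_natCast]
  rw [hRHS]
  have hK1' : (1:ℝ) ≤ (K:ℝ) := by exact_mod_cast hK1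
  have hl12 : ℓ ≤ 1/2 := by nlinarith [mul_nonneg (by linarith : (0:ℝ) ≤ (K:ℝ)-1) hl0.le]
  calc ∫⁻ t in Set.Ico (0:ℝ) 1, (qc x N ((K:ℝ)*ℓ) 0 t : ℝ≥0∞)^2
      = ∫⁻ t in Set.Ico (0:ℝ) 1,
          (∑ k ∈ Finset.range K, (qc x N ℓ ((k:ℝ)*ℓ) t : ℝ≥0∞))^2 := by
        refine lintegral_congr fun t => ?_
        rw [qc_partition x N hl0 K (by linarith) t]
        push_cast
        rfl
    _ = ∫⁻ t in Set.Ico (0:ℝ) 1, ∑ p ∈ Finset.range K ×ˢ Finset.range K,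
          (qc x N ℓ ((p.1:ℝ)*ℓ) t : ℝ≥0∞) * (qc x N ℓ ((p.2:ℝ)*ℓ) t : ℝ≥0∞) := by
        refine lintegral_congr fun t => ?_
        rw [sq, Finset.sum_mul_sum, ← Finset.sum_product']
    _ = ∑ p ∈ Finset.range K ×ˢ Finset.range K, ∫⁻ t in Set.Ico (0:ℝ) 1,
          (qc x N ℓ ((p.1:ℝ)*ℓ) t : ℝ≥0∞) * (qc x N ℓ ((p.2:ℝ)*ℓ) t : ℝ≥0∞) := by
        exact lintegral_finset_sum _ fun p _ => ((qc_meas x N ℓ _).mul (qc_meas x N ℓ _))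
    _ ≤ ∑ p ∈ Finset.range K ×ˢ Finset.range K, ENNReal.ofReal (Sr x N ℓ) := by
        refine Finset.sum_le_sum fun p _ => ?_
        have h2 : (2:ℝ≥0∞) * ∫⁻ t in Set.Ico (0:ℝ) 1,
            (qc x N ℓ ((p.1:ℝ)*ℓ) t : ℝ≥0∞) * (qc x N ℓ ((p.2:ℝ)*ℓ) t : ℝ≥0∞)
            ≤ (2:ℝ≥0∞) * ENNReal.ofReal (Sr x N ℓ) := by
          calc (2:ℝ≥0∞) * ∫⁻ t in Set.Ico (0:ℝ) 1,
              (qc x N ℓ ((p.1:ℝ)*ℓ) t : ℝ≥0∞) * (qc x N ℓ ((p.2:ℝ)*ℓ) t : ℝ≥0∞)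
              = ∫⁻ t in Set.Ico (0:ℝ) 1, 2 *
                ((qc x N ℓ ((p.1:ℝ)*ℓ) t : ℝ≥0∞) * (qc x N ℓ ((p.2:ℝ)*ℓ) t : ℝ≥0∞)) := by
                rw [lintegral_const_mul (f := fun t => (qc x N ℓ ((p.1:ℝ)*ℓ) t : ℝ≥0∞) * (qc x N ℓ ((p.2:ℝ)*ℓ) t : ℝ≥0∞)) _ ((qc_meas x N ℓ _).mul (qc_meas x N ℓ _))]
            _ ≤ ∫⁻ t in Set.Ico (0:ℝ) 1,
                ((qc x N ℓ ((p.1:ℝ)*ℓ) t : ℝ≥0∞)^2 + (qc x N ℓ ((p.2:ℝ)*ℓ) t : ℝ≥0∞)^2) := by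
                refine lintegral_mono fun t => ?_
                have hint : (2 * ((qc x N ℓ ((p.1:ℝ)*ℓ) t : ℤ) * (qc x N ℓ ((p.2:ℝ)*ℓ) t : ℤ)))
                    ≤ (qc x N ℓ ((p.1:ℝ)*ℓ) t : ℤ)^2 + (qc x N ℓ ((p.2:ℝ)*ℓ) t : ℤ)^2 := by
                  nlinarith [sq_nonneg ((qc x N ℓ ((p.1:ℝ)*ℓ) t : ℤ) - (qc x N ℓ ((p.2:ℝ)*ℓ) t : ℤ))]
                have hnat : 2 * (qc x N ℓ ((p.1:ℝ)*ℓ) t * qc x N ℓ ((p.2:ℝ)*ℓ) t)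
                    ≤ qc x N ℓ ((p.1:ℝ)*ℓ) t ^2 + qc x N ℓ ((p.2:ℝ)*ℓ) t ^2 := by exact_mod_cast hint
                calc (2:ℝ≥0∞) * ((qc x N ℓ ((p.1:ℝ)*ℓ) t : ℝ≥0∞) * (qc x N ℓ ((p.2:ℝ)*ℓ) t : ℝ≥0∞))
                    = ((2 * (qc x N ℓ ((p.1:ℝ)*ℓ) t * qc x N ℓ ((p.2:ℝ)*ℓ) t) : ℕ) : ℝ≥0∞) := by
                      push_cast; ring
                  _ ≤ ((qc x N ℓ ((p.1:ℝ)*ℓ) t ^2 + qc x N ℓ ((p.2:ℝ)*ℓ) t ^2 : ℕ) : ℝ≥0∞) := by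
                      exact_mod_cast Nat.cast_le.2 hnat
                  _ = (qc x N ℓ ((p.1:ℝ)*ℓ) t : ℝ≥0∞)^2 + (qc x N ℓ ((p.2:ℝ)*ℓ) t : ℝ≥0∞)^2 := by
                      push_cast; ring
            _ = (∫⁻ t in Set.Ico (0:ℝ) 1, (qc x N ℓ ((p.1:ℝ)*ℓ) t : ℝ≥0∞)^2)
                + ∫⁻ t in Set.Ico (0:ℝ) 1, (qc x N ℓ ((p.2:ℝ)*ℓ) t : ℝ≥0∞)^2 := by
                exact lintegral_add_left ((qc_meas x N ℓ _).pow_const 2) _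
            _ = (2:ℝ≥0∞) * ENNReal.ofReal (Sr x N ℓ) := by
                rw [lint_q_sq x N _ hl0 hl12, lint_q_sq x N _ hl0 hl12, two_mul]
        exact (ENNReal.mul_le_mul_iff_right (by norm_num) (by norm_num)).1 h2
    _ = (K : ℝ≥0∞)^2 * ENNReal.ofReal (Sr x N ℓ) := by
        rw [Finset.sum_const, Finset.card_product, Finset.card_range, nsmul_eq_mul]
        push_cast
        ring

lemma Sr_lower (x : ℕ → ℝ) (N : ℕ) {ℓ : ℝ} (hl0 : 0 < ℓ) (hl : ℓ ≤ 1/2) :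
    ((N:ℝ)*ℓ)^2 ≤ Sr x N ℓ := by
  rw [← ENNReal.ofReal_le_ofReal_iff (Sr_nonneg x N ℓ)]
  have hμ : (volume.restrict (Set.Ico (0:ℝ) 1)) Set.univ = 1 := by
    rw [Measure.restrict_apply MeasurableSet.univ, Set.univ_inter, Real.volume_Ico]
    norm_num
  have hpq : Real.HolderConjugate 2 2 := Real.HolderConjugate.two_two
  have hCS := ENNReal.lintegral_mul_le_Lp_mul_Lq (volume.restrict (Set.Ico (0:ℝ) 1)) hpq
    (qc_meas x N ℓ 0).aemeasurable aemeasurable_const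
    (f := fun t => (qc x N ℓ 0 t : ℝ≥0∞)) (g := fun _ => (1:ℝ≥0∞))
  simp only [Pi.mul_apply, mul_one, ENNReal.one_rpow] at hCS
  rw [lintegral_const, hμ, mul_one, ENNReal.one_rpow, mul_one] at hCS
  rw [lint_q x N 0 (le_of_lt hl0) (by linarith)] at hCS
  have hsq : ((N:ℝ≥0∞) * ENNReal.ofReal ℓ)^2
      ≤ ((∫⁻ t in Set.Ico (0:ℝ) 1, (qc x N ℓ 0 t : ℝ≥0∞) ^ (2:ℝ)) ^ (1/(2:ℝ)))^2 :=
    pow_le_pow_left' hCS 2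
  have hrw : ((∫⁻ t in Set.Ico (0:ℝ) 1, (qc x N ℓ 0 t : ℝ≥0∞) ^ (2:ℝ)) ^ (1/(2:ℝ)))^2
      = ∫⁻ t in Set.Ico (0:ℝ) 1, (qc x N ℓ 0 t : ℝ≥0∞) ^ (2:ℝ) := by
    rw [← ENNReal.rpow_natCast (_ ^ (1/(2:ℝ))) 2, ← ENNReal.rpow_mul]
    norm_num
  rw [hrw] at hsq
  have hint : ∫⁻ t in Set.Ico (0:ℝ) 1, (qc x N ℓ 0 t : ℝ≥0∞) ^ (2:ℝ)
      = ENNReal.ofReal (Sr x N ℓ) := by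
    rw [← lint_q_sq x N 0 hl0 hl]
    refine lintegral_congr fun t => ?_
    rw [← ENNReal.rpow_natCast (qc x N ℓ 0 t : ℝ≥0∞) 2]
    norm_num
  rw [hint] at hsq
  refine le_trans (le_of_eq ?_) hsq
  rw [ENNReal.ofReal_pow (by positivity), ENNReal.ofReal_mul (by positivity),
    ENNReal.ofReal_natCast]

lemma card_nd_filter (x : ℕ → ℝ) (N : ℕ) {r : ℝ} (hr : 0 ≤ r) :
    ((Finset.Icc 1 N ×ˢ Finset.Icc 1 N).filter (fun p => nd (x p.1 - x p.2) ≤ r)).card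
      = pairCount x N r + N := by
  have hsplit := Finset.card_filter_add_card_filter_not
    (s := (Finset.Icc 1 N ×ˢ Finset.Icc 1 N).filter (fun p => nd (x p.1 - x p.2) ≤ r))
    (p := fun p => p.1 = p.2)
  rw [Finset.filter_filter, Finset.filter_filter] at hsplit
  have h1 : ((Finset.Icc 1 N ×ˢ Finset.Icc 1 N).filter
      (fun p => nd (x p.1 - x p.2) ≤ r ∧ p.1 = p.2)).card = N := by
    have he : (Finset.Icc 1 N ×ˢ Finset.Icc 1 N).filter
        (fun p => nd (x p.1 - x p.2) ≤ r ∧ p.1 = p.2) = Finset.diag (Finset.Icc 1 N) := by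
      ext p
      simp only [Finset.mem_filter, Finset.mem_product, Finset.mem_diag]
      constructor
      · rintro ⟨⟨hp1, hp2⟩, _, heq⟩
        exact ⟨hp1, heq⟩
      · rintro ⟨hp1, heq⟩
        refine ⟨⟨hp1, heq ▸ hp1⟩, ?_, heq⟩
        rw [heq, sub_self, nd_zero]
        exact hr
    rw [he, Finset.diag_card, Nat.card_Icc]
    omega
  have h2 : ((Finset.Icc 1 N ×ˢ Finset.Icc 1 N).filter
      (fun p => nd (x p.1 - x p.2) ≤ r ∧ ¬p.1 = p.2)).card = pairCount x N r := by
    rw [pairCount]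
    congr 1
    apply Finset.filter_congr
    intro p _
    constructor
    · rintro ⟨ha, hb⟩; exact ⟨hb, ha⟩
    · rintro ⟨ha, hb⟩; exact ⟨hb, ha⟩
  omega

lemma Sr_diff_upper (x : ℕ → ℝ) (N : ℕ) {ℓ ℓ' : ℝ} (h0 : 0 ≤ ℓ) (hll : ℓ ≤ ℓ') :
    Sr x N ℓ' - Sr x N ℓ ≤ (ℓ' - ℓ) * ((pairCount x N ℓ' : ℝ) + N) := by
  have key : ∀ p ∈ (Finset.Icc 1 N ×ˢ Finset.Icc 1 N),
      max (ℓ' - nd (x p.1 - x p.2)) 0 - max (ℓ - nd (x p.1 - x p.2)) 0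
        ≤ (ℓ' - ℓ) * (if nd (x p.1 - x p.2) ≤ ℓ' then 1 else 0) := by
    intro p _
    set d := nd (x p.1 - x p.2) with hd
    have hd0 : 0 ≤ d := nd_nonneg _
    by_cases hc : d ≤ ℓ'
    · rw [if_pos hc, mul_one]
      rcases max_cases (ℓ' - d) (0:ℝ) with ⟨h1, h1'⟩ | ⟨h1, h1'⟩ <;>
        rcases max_cases (ℓ - d) (0:ℝ) with ⟨h2, h2'⟩ | ⟨h2, h2'⟩ <;>
        rw [h1, h2] <;> linarith
    · push_neg at hc
      rw [if_neg (by linarith), mul_zero]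
      rcases max_cases (ℓ' - d) (0:ℝ) with ⟨h1, h1'⟩ | ⟨h1, h1'⟩ <;>
        rcases max_cases (ℓ - d) (0:ℝ) with ⟨h2, h2'⟩ | ⟨h2, h2'⟩ <;>
        rw [h1, h2] <;> linarith
  calc Sr x N ℓ' - Sr x N ℓ
      = ∑ p ∈ (Finset.Icc 1 N ×ˢ Finset.Icc 1 N),
        (max (ℓ' - nd (x p.1 - x p.2)) 0 - max (ℓ - nd (x p.1 - x p.2)) 0) := by
        rw [Sr, Sr, Finset.sum_sub_distrib]
    _ ≤ ∑ p ∈ (Finset.Icc 1 N ×ˢ Finset.Icc 1 N),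
        (ℓ' - ℓ) * (if nd (x p.1 - x p.2) ≤ ℓ' then 1 else 0) := Finset.sum_le_sum key
    _ = (ℓ' - ℓ) * ((pairCount x N ℓ' : ℝ) + N) := by
        rw [← Finset.mul_sum]
        congr 1
        rw [← Finset.sum_filter, Finset.sum_const, nsmul_eq_mul, mul_one,
          card_nd_filter x N (le_trans h0 hll)]
        push_cast
        ring

lemma Sr_diff_lower (x : ℕ → ℝ) (N : ℕ) {ℓ ℓ' : ℝ} (h0 : 0 ≤ ℓ) (hll : ℓ ≤ ℓ') :
    (ℓ' - ℓ) * ((pairCount x N ℓ : ℝ) + N) ≤ Sr x N ℓ' - Sr x N ℓ := by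
  have key : ∀ p ∈ (Finset.Icc 1 N ×ˢ Finset.Icc 1 N),
      (ℓ' - ℓ) * (if nd (x p.1 - x p.2) ≤ ℓ then 1 else 0)
        ≤ max (ℓ' - nd (x p.1 - x p.2)) 0 - max (ℓ - nd (x p.1 - x p.2)) 0 := by
    intro p _
    set d := nd (x p.1 - x p.2) with hd
    have hd0 : 0 ≤ d := nd_nonneg _
    by_cases hc : d ≤ ℓ
    · rw [if_pos hc, mul_one]
      rcases max_cases (ℓ' - d) (0:ℝ) with ⟨h1, h1'⟩ | ⟨h1, h1'⟩ <;>
        rcases max_cases (ℓ - d) (0:ℝ) with ⟨h2, h2'⟩ | ⟨h2, h2'⟩ <;>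
        rw [h1, h2] <;> linarith
    · push_neg at hc
      rw [if_neg (by linarith), mul_zero]
      rcases max_cases (ℓ' - d) (0:ℝ) with ⟨h1, h1'⟩ | ⟨h1, h1'⟩ <;>
        rcases max_cases (ℓ - d) (0:ℝ) with ⟨h2, h2'⟩ | ⟨h2, h2'⟩ <;>
        rw [h1, h2] <;> linarith
  calc (ℓ' - ℓ) * ((pairCount x N ℓ : ℝ) + N)
      = ∑ p ∈ (Finset.Icc 1 N ×ˢ Finset.Icc 1 N),
        (ℓ' - ℓ) * (if nd (x p.1 - x p.2) ≤ ℓ then 1 else 0) := by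
        rw [← Finset.mul_sum]
        congr 1
        rw [← Finset.sum_filter, Finset.sum_const, nsmul_eq_mul, mul_one,
          card_nd_filter x N h0]
        push_cast
        ring
    _ ≤ ∑ p ∈ (Finset.Icc 1 N ×ˢ Finset.Icc 1 N),
        (max (ℓ' - nd (x p.1 - x p.2)) 0 - max (ℓ - nd (x p.1 - x p.2)) 0) :=
        Finset.sum_le_sum key
    _ = Sr x N ℓ' - Sr x N ℓ := by rw [Sr, Sr, Finset.sum_sub_distrib]

noncomputable def psiA (x : ℕ → ℝ) (β : ℝ) (N : ℕ) (v : ℝ) : ℝ :=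
  Sr x N (v / (N:ℝ)^β) * (N:ℝ)^(2*β-2)

section scale
variable {x : ℕ → ℝ} {β : ℝ} {N : ℕ}

lemma cast_pos (hN : 1 ≤ N) : (0:ℝ) < (N:ℝ) := by
  have : (1:ℝ) ≤ (N:ℝ) := by exact_mod_cast hN
  linarith

lemma rpow_pos (hN : 1 ≤ N) (c : ℝ) : (0:ℝ) < (N:ℝ)^c :=
  Real.rpow_pos_of_pos (cast_pos hN) c

lemma rpow_split2 (hN : 1 ≤ N) : (N:ℝ)^(2*β-2) = ((N:ℝ)^β)^2 / (N:ℝ)^2 := by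
  have hb := cast_pos hN
  rw [Real.rpow_sub hb, show (2*β) = β*(2:ℝ) by ring, Real.rpow_mul hb.le,
    show (2:ℝ) = ((2:ℕ):ℝ) by norm_num, Real.rpow_natCast, Real.rpow_natCast]

lemma rpow_split1 (hN : 1 ≤ N) : (N:ℝ)^(β-1) = (N:ℝ)^β / (N:ℝ) := by
  have hb := cast_pos hN
  rw [Real.rpow_sub hb, Real.rpow_one]

lemma rpow_split3 (hN : 1 ≤ N) : (N:ℝ)^(2-β) = (N:ℝ)^2 / (N:ℝ)^β := by
  have hb := cast_pos hN
  rw [Real.rpow_sub hb, show (2:ℝ) = ((2:ℕ):ℝ) by norm_num, Real.rpow_natCast]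

lemma psi_zero (x : ℕ → ℝ) (β : ℝ) (N : ℕ) : psiA x β N 0 = 0 := by
  rw [psiA, zero_div, Sr_zero, zero_mul]

lemma psi_diff_upper (x : ℕ → ℝ) (β : ℝ) (N : ℕ) (hN : 1 ≤ N) {v v' : ℝ}
    (h0 : 0 ≤ v) (hv : v ≤ v') :
    psiA x β N v' - psiA x β N v ≤ (v' - v) * (R2 x β v' N + (N:ℝ)^(β-1)) := by
  have hb := cast_pos hN
  have ha := rpow_pos hN β
  have h0' : 0 ≤ v / (N:ℝ)^β := div_nonneg h0 ha.le
  have hll : v / (N:ℝ)^β ≤ v' / (N:ℝ)^β := by gcongr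
  have hd := Sr_diff_upper x N h0' hll
  have hstep : psiA x β N v' - psiA x β N v
      = (Sr x N (v' / (N:ℝ)^β) - Sr x N (v / (N:ℝ)^β)) * (N:ℝ)^(2*β-2) := by
    rw [psiA, psiA]; ring
  rw [hstep]
  have hmul := mul_le_mul_of_nonneg_right hd (le_of_lt (rpow_pos hN (2*β-2)))
  refine le_trans hmul (le_of_eq ?_)
  rw [R2, rpow_split1 hN, rpow_split2 hN, rpow_split3 hN]
  field_simp

lemma psi_diff_lower (x : ℕ → ℝ) (β : ℝ) (N : ℕ) (hN : 1 ≤ N) {v v' : ℝ}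
    (h0 : 0 ≤ v) (hv : v ≤ v') :
    (v' - v) * (R2 x β v N + (N:ℝ)^(β-1)) ≤ psiA x β N v' - psiA x β N v := by
  have hb := cast_pos hN
  have ha := rpow_pos hN β
  have h0' : 0 ≤ v / (N:ℝ)^β := div_nonneg h0 ha.le
  have hll : v / (N:ℝ)^β ≤ v' / (N:ℝ)^β := by gcongr
  have hd := Sr_diff_lower x N h0' hll
  have hstep : psiA x β N v' - psiA x β N v
      = (Sr x N (v' / (N:ℝ)^β) - Sr x N (v / (N:ℝ)^β)) * (N:ℝ)^(2*β-2) := by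
    rw [psiA, psiA]; ring
  rw [hstep]
  have hmul := mul_le_mul_of_nonneg_right hd (le_of_lt (rpow_pos hN (2*β-2)))
  refine le_trans (le_of_eq ?_) hmul
  rw [R2, rpow_split1 hN, rpow_split2 hN, rpow_split3 hN]
  field_simp

lemma psi_lower (x : ℕ → ℝ) (β : ℝ) (N : ℕ) (hN : 1 ≤ N) {v : ℝ} (hv0 : 0 < v)
    (hvh : v / (N:ℝ)^β ≤ 1/2) : v^2 ≤ psiA x β N v := by
  have hb := cast_pos hN
  have ha := rpow_pos hN β
  have hl0 : 0 < v / (N:ℝ)^β := div_pos hv0 ha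
  have hS := Sr_lower x N hl0 hvh
  have hmul := mul_le_mul_of_nonneg_right hS (le_of_lt (rpow_pos hN (2*β-2)))
  refine le_trans (le_of_eq ?_) hmul
  rw [rpow_split2 hN]
  field_simp

lemma psi_subadd (x : ℕ → ℝ) (β : ℝ) (N : ℕ) (hN : 1 ≤ N) (K : ℕ) (hK1 : 1 ≤ K)
    {v : ℝ} (hv0 : 0 < v) (hvh : v / (N:ℝ)^β ≤ 1/2) :
    psiA x β N v ≤ (K:ℝ)^2 * psiA x β N (v/K) := by
  have hb := cast_pos hN
  have ha := rpow_pos hN β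
  have hKpos : (0:ℝ) < (K:ℝ) := by exact_mod_cast hK1
  have hl0 : 0 < (v/(K:ℝ)) / (N:ℝ)^β := by positivity
  have hrw : (K:ℝ) * ((v/(K:ℝ)) / (N:ℝ)^β) = v / (N:ℝ)^β := by
    field_simp
  have hS := Sr_subadd x N hl0 K hK1 (by rw [hrw]; exact hvh)
  rw [hrw] at hS
  have hmul := mul_le_mul_of_nonneg_right hS (le_of_lt (rpow_pos hN (2*β-2)))
  rw [psiA, psiA]
  refine le_trans hmul (le_of_eq ?_)
  ring

end scale

lemma gauss_sum_real : ∀ n : ℕ, ∑ j ∈ Finset.range n, ((j:ℝ)+1) = (n:ℝ)*((n:ℝ)+1)/2 := by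
  intro n
  induction n with
  | zero => simp
  | succ n ih =>
      rw [Finset.sum_range_succ, ih]
      push_cast
      ring

lemma rpow_bm1_tendsto {β : ℝ} (hβ1 : β < 1) :
    Tendsto (fun N : ℕ => (N:ℝ)^(β-1)) atTop (nhds 0) := by
  have h1 : Tendsto (fun y : ℝ => y^(-(1-β))) atTop (nhds 0) :=
    tendsto_rpow_neg_atTop (by linarith)
  have h2 := h1.comp tendsto_natCast_atTop_atTop (α := ℕ)
  have he : (fun N : ℕ => (N:ℝ)^(β-1)) = (fun y : ℝ => y^(-(1-β))) ∘ (fun N : ℕ => (N:ℝ)) := by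
    funext N
    simp only [Function.comp_apply]
    norm_num
  rw [he]
  exact h2

lemma R2_nonneg (x : ℕ → ℝ) (β s : ℝ) (N : ℕ) : 0 ≤ R2 x β s N := by
  rw [R2]
  positivity

lemma ev_half {β : ℝ} (hβ0 : 0 ≤ β) {σ : ℝ} (hσ0 : 0 < σ) (hh : β = 0 → σ ≤ 1/2) :
    ∀ᶠ N : ℕ in atTop, σ / (N:ℝ)^β ≤ 1/2 := by
  by_cases hb : β = 0
  · subst hb
    refine Eventually.of_forall fun N => ?_
    rw [Real.rpow_zero, div_one]
    exact hh rfl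
  · have hβpos : 0 < β := lt_of_le_of_ne hβ0 (Ne.symm hb)
    have h1 : Tendsto (fun y : ℝ => y^(-β)) atTop (nhds 0) := tendsto_rpow_neg_atTop hβpos
    have h2 := h1.comp (tendsto_natCast_atTop_atTop :
      Tendsto (fun n : ℕ => (n:ℝ)) atTop atTop)
    have h3 : Tendsto (fun N : ℕ => σ * (N:ℝ)^(-β)) atTop (nhds (σ * 0)) :=
      Tendsto.const_mul σ h2
    rw [mul_zero] at h3
    have h4 := h3.eventually_lt_const (show (0:ℝ) < 1/2 by norm_num)
    filter_upwards [h4, eventually_ge_atTop 1] with N h5 hN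
    have hb2 := cast_pos hN
    rw [Real.rpow_neg hb2.le, ← div_eq_mul_inv] at h5
    exact h5.le

lemma psi_small (x : ℕ → ℝ) {β : ℝ} (hβ1 : β < 1) {s₀ : ℝ}
    (h : ∀ s : ℝ, 0 < s → s < s₀ → Tendsto (fun N => R2 x β s N) atTop (nhds (2*s)))
    {σ : ℝ} (hσ0 : 0 < σ) (hσ : σ < s₀) {ε : ℝ} (hε : 0 < ε) :
    ∀ᶠ N : ℕ in atTop, psiA x β N σ ≤ σ^2 + ε := by
  obtain ⟨J₀, hJ₀⟩ := exists_nat_gt (2*σ^2/ε)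
  set J := J₀ + 1 with hJdef
  have hJpos : 0 < J := Nat.succ_pos _
  have hJr : (0:ℝ) < (J:ℝ) := by exact_mod_cast hJpos
  have hJ : 2*σ^2/ε < (J:ℝ) := by
    refine lt_of_lt_of_le hJ₀ ?_
    exact_mod_cast Nat.le_succ J₀
  have hterm : σ^2/(J:ℝ) < ε/2 := by
    rw [div_lt_iff₀ hJr]
    rw [div_lt_iff₀ hε] at hJ
    nlinarith
  -- the comparison sequence
  set G : ℕ → ℝ := fun N => ∑ j ∈ Finset.range J,
    (σ/(J:ℝ)) * (R2 x β (((j:ℝ)+1)*σ/(J:ℝ)) N + (N:ℝ)^(β-1)) with hGdef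
  have hGlim : Tendsto G atTop
      (nhds (∑ j ∈ Finset.range J, (σ/(J:ℝ)) * (2*(((j:ℝ)+1)*σ/(J:ℝ)) + 0))) := by
    refine tendsto_finset_sum _ fun j hj => ?_
    refine Tendsto.const_mul _ (Tendsto.add ?_ (rpow_bm1_tendsto hβ1))
    have hjJ : ((j:ℝ)+1) ≤ (J:ℝ) := by
      exact_mod_cast Nat.succ_le_of_lt (Finset.mem_range.1 hj)
    have hpos : 0 < ((j:ℝ)+1)*σ/(J:ℝ) := by positivity
    have hlt : ((j:ℝ)+1)*σ/(J:ℝ) < s₀ := by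
      have : ((j:ℝ)+1)*σ/(J:ℝ) ≤ σ := by
        rw [div_le_iff₀ hJr]
        nlinarith
      linarith
    exact h _ hpos hlt
  have hLval : (∑ j ∈ Finset.range J, (σ/(J:ℝ)) * (2*(((j:ℝ)+1)*σ/(J:ℝ)) + 0))
      = σ^2 + σ^2/(J:ℝ) := by
    have : ∀ j ∈ Finset.range J, (σ/(J:ℝ)) * (2*(((j:ℝ)+1)*σ/(J:ℝ)) + 0)
        = (2*σ^2/(J:ℝ)^2) * ((j:ℝ)+1) := by
      intro j _
      field_simp
      ring
    rw [Finset.sum_congr rfl this, ← Finset.mul_sum, gauss_sum_real]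
    field_simp
  rw [hLval] at hGlim
  have hGev : ∀ᶠ N : ℕ in atTop, G N < σ^2 + ε :=
    hGlim.eventually_lt_const (by linarith)
  filter_upwards [hGev, eventually_ge_atTop 1] with N h1 hN
  -- telescoping bound : psiA x β N σ ≤ G N
  have htel := Finset.sum_range_sub (f := fun j => psiA x β N ((j:ℝ)*σ/(J:ℝ))) J
  have hfJ : ((J:ℝ)*σ/(J:ℝ)) = σ := by field_simp
  have hf0 : ((0:ℕ):ℝ)*σ/(J:ℝ) = 0 := by simp
  have hψG : psiA x β N σ ≤ G N := by
    have hsum : psiA x β N σ = ∑ j ∈ Finset.range J,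
        (psiA x β N (((j:ℝ)+1)*σ/(J:ℝ)) - psiA x β N ((j:ℝ)*σ/(J:ℝ))) := by
      rw [show ∑ j ∈ Finset.range J,
          (psiA x β N (((j:ℝ)+1)*σ/(J:ℝ)) - psiA x β N ((j:ℝ)*σ/(J:ℝ)))
        = ∑ j ∈ Finset.range J,
          (psiA x β N (((j+1:ℕ):ℝ)*σ/(J:ℝ)) - psiA x β N ((j:ℝ)*σ/(J:ℝ))) from
        Finset.sum_congr rfl (fun j _ => by push_cast; ring_nf), htel, hfJ, hf0, psi_zero,
        sub_zero]
    rw [hsum, hGdef]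
    refine Finset.sum_le_sum fun j _ => ?_
    have h0j : 0 ≤ (j:ℝ)*σ/(J:ℝ) := by positivity
    have hvj : (j:ℝ)*σ/(J:ℝ) ≤ ((j:ℝ)+1)*σ/(J:ℝ) := by
      gcongr
      linarith
    have hdu := psi_diff_upper x β N hN h0j hvj
    have hdiff : ((j:ℝ)+1)*σ/(J:ℝ) - (j:ℝ)*σ/(J:ℝ) = σ/(J:ℝ) := by
      field_simp
      ring
    rw [hdiff] at hdu
    exact hdu
  linarith

lemma psi_upper (x : ℕ → ℝ) {β : ℝ} (hβ0 : 0 ≤ β) (hβ1 : β < 1) {s₀ : ℝ} (hs₀ : 0 < s₀)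
    (h : ∀ s : ℝ, 0 < s → s < s₀ → Tendsto (fun N => R2 x β s N) atTop (nhds (2*s)))
    {σ : ℝ} (hσ0 : 0 < σ) (hh : β = 0 → σ ≤ 1/2) {ε : ℝ} (hε : 0 < ε) :
    ∀ᶠ N : ℕ in atTop, psiA x β N σ ≤ σ^2 + ε := by
  obtain ⟨K, hK⟩ := exists_nat_gt (σ/s₀)
  have hKr : (0:ℝ) < (K:ℝ) := lt_of_le_of_lt (by positivity) hK
  have hK1 : 1 ≤ K := by exact_mod_cast Nat.one_le_iff_ne_zero.2 (by
    intro hc; rw [hc] at hKr; norm_num at hKr)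
  have hσK : σ/(K:ℝ) < s₀ := by
    rw [div_lt_iff₀ hKr]
    rw [div_lt_iff₀ hs₀] at hK
    linarith [mul_comm (K:ℝ) s₀]
  have hσK0 : 0 < σ/(K:ℝ) := by positivity
  have hε' : 0 < ε/(K:ℝ)^2 := by positivity
  filter_upwards [psi_small x hβ1 h hσK0 hσK hε', ev_half hβ0 hσ0 hh,
    eventually_ge_atTop 1] with N h1 h2 hN
  calc psiA x β N σ ≤ (K:ℝ)^2 * psiA x β N (σ/K) := psi_subadd x β N hN K hK1 hσ0 h2
    _ ≤ (K:ℝ)^2 * ((σ/K)^2 + ε/(K:ℝ)^2) := by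
        exact mul_le_mul_of_nonneg_left h1 (by positivity)
    _ = σ^2 + ε := by
        field_simp

lemma main_conv (x : ℕ → ℝ) {β : ℝ} (hβ0 : 0 ≤ β) (hβ1 : β < 1) {s₀ : ℝ} (hs₀ : 0 < s₀)
    (h : ∀ s : ℝ, 0 < s → s < s₀ → Tendsto (fun N => R2 x β s N) atTop (nhds (2*s)))
    {s : ℝ} (hs : 0 < s) (hs2 : β = 0 → s < 1/2) :
    Tendsto (fun N => R2 x β s N) atTop (nhds (2*s)) := by
  rw [Metric.tendsto_atTop]
  intro ε hε
  -- choose δ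
  have hδex : ∃ δ : ℝ, 0 < δ ∧ δ < s ∧ δ ≤ ε/4 ∧ (β = 0 → s + δ ≤ 1/2) := by
    by_cases hb : β = 0
    · refine ⟨min (ε/4) (min (s/2) ((1/2 - s)/2)), ?_, ?_, ?_, ?_⟩
      · have := hs2 hb
        refine lt_min (by positivity) (lt_min (by positivity) (by linarith))
      · refine lt_of_le_of_lt (le_trans (min_le_right _ _) (min_le_left _ _)) (by linarith)
      · exact min_le_left _ _
      · intro _
        have h1 : min (ε/4) (min (s/2) ((1/2 - s)/2)) ≤ (1/2 - s)/2 :=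
          le_trans (min_le_right _ _) (min_le_right _ _)
        have := hs2 hb
        linarith
    · refine ⟨min (ε/4) (s/2), lt_min (by positivity) (by positivity),
        lt_of_le_of_lt (min_le_right _ _) (by linarith), min_le_left _ _, fun hc => absurd hc hb⟩
  obtain ⟨δ, hδ0, hδs, hδε, hδh⟩ := hδex
  have hsp : 0 < s + δ := by linarith
  have hsm : 0 < s - δ := by linarith
  have hhp : β = 0 → s + δ ≤ 1/2 := hδh
  have hhm : β = 0 → s - δ ≤ 1/2 := fun hb => by have := hs2 hb; linarith
  have hhs : β = 0 → s ≤ 1/2 := fun hb => by have := hs2 hb; linarith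
  have hε4 : 0 < δ * (ε/4) := by positivity
  have evU := psi_upper x hβ0 hβ1 hs₀ h hsp hhp hε4
  have evL := psi_upper x hβ0 hβ1 hs₀ h hsm hhm hε4
  have evH := ev_half hβ0 hs hhs
  have evR := (rpow_bm1_tendsto hβ1).eventually_lt_const (show (0:ℝ) < ε/4 by linarith)
  have EV : ∀ᶠ N : ℕ in atTop, dist (R2 x β s N) (2*s) < ε := by
    filter_upwards [evU, evL, evH, evR, eventually_ge_atTop 1] with N h1 h2 h3 h4 hN
    have hρ : (0:ℝ) ≤ (N:ℝ)^(β-1) := Real.rpow_nonneg (Nat.cast_nonneg N) _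
    have hψs : s^2 ≤ psiA x β N s := psi_lower x β N hN hs h3
    -- upper bound
    have hdl := psi_diff_lower x β N hN (le_of_lt hs) (show s ≤ s + δ by linarith)
    rw [show s + δ - s = δ by ring] at hdl
    have hub : δ * (R2 x β s N + (N:ℝ)^(β-1)) ≤ 2*s*δ + δ^2 + δ*(ε/4) := by
      nlinarith
    have hub2 : R2 x β s N ≤ 2*s + δ + ε/4 := by
      have hmul : δ * R2 x β s N ≤ δ * (2*s + δ + ε/4) := by nlinarith
      exact le_of_mul_le_mul_left hmul hδ0
    -- lower bound
    have hdu := psi_diff_upper x β N hN (le_of_lt hsm) (show s - δ ≤ s by linarith)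
    rw [show s - (s - δ) = δ by ring] at hdu
    have hlb : s^2 - ((s-δ)^2 + δ*(ε/4)) ≤ δ * (R2 x β s N + (N:ℝ)^(β-1)) := by
      nlinarith
    have hlb2 : 2*s - δ - ε/4 - (N:ℝ)^(β-1) ≤ R2 x β s N := by
      have hmul : δ * (2*s - δ - ε/4 - (N:ℝ)^(β-1)) ≤ δ * R2 x β s N := by nlinarith
      exact le_of_mul_le_mul_left hmul hδ0
    rw [Real.dist_eq, abs_lt]
    constructor
    · linarith
    · linarith
  exact eventually_atTop.1 EV

lemma nd_le_half (d : ℝ) : nd d ≤ 1/2 := by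
  rw [nd]
  exact abs_sub_round d

lemma R2_half (x : ℕ → ℝ) : Tendsto (fun N => R2 x 0 (1/2:ℝ) N) atTop (nhds 1) := by
  have key : ∀ N : ℕ, 1 ≤ N → R2 x 0 (1/2:ℝ) N = 1 - (N:ℝ)⁻¹ := by
    intro N hN
    have hb := cast_pos hN
    have hcnt : pairCount x (N : ℕ) ((1/2:ℝ)) + N = N*N := by
      rw [← card_nd_filter x N (by norm_num : (0:ℝ) ≤ 1/2)]
      rw [Finset.filter_true_of_mem (fun p _ => nd_le_half _)]
      rw [Finset.card_product, Nat.card_Icc, Nat.add_sub_cancel]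
    have harg : (1/2:ℝ) / (N:ℝ)^(0:ℝ) = 1/2 := by
      rw [Real.rpow_zero, div_one]
    rw [R2, harg]
    have hP : (pairCount x N (1/2:ℝ) : ℝ) = (N:ℝ)*(N:ℝ) - (N:ℝ) := by
      have : (((pairCount x N (1/2:ℝ) + N : ℕ)):ℝ) = ((N*N : ℕ):ℝ) := by
        exact_mod_cast congrArg (Nat.cast (R := ℝ)) hcnt
      push_cast at this
      linarith
    rw [hP, show (2:ℝ) - 0 = 2 by ring, show (N:ℝ)^(2:ℝ) = (N:ℝ)^2 by
      rw [show (2:ℝ) = ((2:ℕ):ℝ) by norm_num, Real.rpow_natCast]]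
    field_simp
  have hlim : Tendsto (fun N : ℕ => 1 - (N:ℝ)⁻¹) atTop (nhds 1) := by
    have h1 : Tendsto (fun N : ℕ => (N:ℝ)⁻¹) atTop (nhds 0) := tendsto_inv_atTop_nhds_zero_nat
    have h2 := (tendsto_const_nhds (x := (1:ℝ)) (f := atTop (α := ℕ))).sub h1
    rw [sub_zero] at h2
    exact h2
  refine Tendsto.congr' ?_ hlim
  filter_upwards [eventually_ge_atTop 1] with N hN
  exact (key N hN).symm

theorem stmt6 (x : ℕ → ℝ) (hx : ∀ n, x n ∈ Set.Icc (0:ℝ) 1)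
    (β : ℝ) (hβ0 : 0 ≤ β) (hβ1 : β < 1) (s₀ : ℝ) (hs₀ : 0 < s₀)
    (h : ∀ s : ℝ, 0 < s → s < s₀ →
      Tendsto (fun N => R2 x β s N) atTop (nhds (2 * s))) :
    PPC x β := by
  intro s hs hs12
  by_cases hb : β = 0
  · subst hb
    by_cases hhalf : s = 1/2
    · subst hhalf
      have := R2_half x
      rw [show (2:ℝ) * (1/2) = 1 by norm_num]
      exact this
    · exact main_conv x hβ0 hβ1 hs₀ h hs
        (fun _ => lt_of_le_of_ne (hs12 rfl) hhalf)
  · exact main_conv x hβ0 hβ1 hs₀ h hs (fun hc => absurd hc hb)
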